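/- For 0 < τ₁ < τ₂, σ₀ > 0, S > 0, the determinant d(ξ) defined as in the linearized system satisfies d(ξ) = S·(√(τ₁τ₂)/Ξ²)·(∫_0^1 ρ^{-1/2} e^{Ξ²τ₁(ρ-1)} dρ − ∫_0^1 ρ^{-1/2} e^{Ξ²τ₂(ρ-1)} dρ) for every ξ ≠ 0, where Ξ = σ₀ξ/√2. -/

import Mathlib

open MeasureTheory Real intervalIntegral Set

lemma subst_lemma (c τ : ℝ) (hτ : 0 < τ) :
    (∫ θ in (0:ℝ)..τ, Real.exp (c * (θ - τ)) / Real.sqrt θ)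
      = Real.sqrt τ * ∫ ρ in (0:ℝ)..1, Real.exp (c * τ * (ρ - 1)) / Real.sqrt ρ := by
  have h := intervalIntegral.integral_comp_mul_left
    (a := (0:ℝ)) (b := 1) (fun θ => Real.exp (c * (θ - τ)) / Real.sqrt θ) hτ.ne'
  simp only [mul_zero, mul_one, smul_eq_mul] at h
  have hpt : (fun ρ : ℝ => Real.exp (c * (τ * ρ - τ)) / Real.sqrt (τ * ρ))
      = fun ρ : ℝ => (Real.sqrt τ)⁻¹ * (Real.exp (c * τ * (ρ - 1)) / Real.sqrt ρ) := by
    funext ρ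
    rw [Real.sqrt_mul hτ.le]
    rw [show c * (τ * ρ - τ) = c * τ * (ρ - 1) by ring]
    field_simp
  rw [hpt] at h
  rw [intervalIntegral.integral_const_mul] at h
  have hst : Real.sqrt τ ≠ 0 := (Real.sqrt_pos.2 hτ).ne'
  have hts : τ * (Real.sqrt τ)⁻¹ = Real.sqrt τ := by
    rw [← div_eq_mul_inv]; exact Real.div_sqrt
  have hA : (∫ θ in (0:ℝ)..τ, Real.exp (c * (θ - τ)) / Real.sqrt θ)
      = τ * ((Real.sqrt τ)⁻¹ * ∫ ρ in (0:ℝ)..1, Real.exp (c * τ * (ρ - 1)) / Real.sqrt ρ) := by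
    rw [h]; field_simp
  rw [hA, ← mul_assoc, hts]

lemma int_sing (c τ : ℝ) (hc : 0 < c) (hτ : 0 < τ) :
    IntervalIntegrable (fun θ => Real.exp (c * (θ - τ)) / Real.sqrt θ) volume 0 τ := by
  apply IntervalIntegrable.mono_fun
    (intervalIntegral.intervalIntegrable_rpow' (a := 0) (b := τ) (r := -(1/2)) (by norm_num))
  · apply Measurable.aestronglyMeasurable
    fun_prop
  · rw [Filter.EventuallyLE, ae_restrict_iff' measurableSet_uIoc]
    filter_upwards with θ hθ
    rw [Set.uIoc_of_le hτ.le] at hθ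
    obtain ⟨h0, h1⟩ := hθ
    have hsq : Real.sqrt θ = θ ^ ((1:ℝ)/2) := Real.sqrt_eq_rpow θ
    rw [Real.norm_eq_abs, Real.norm_eq_abs, abs_of_nonneg (by positivity),
      abs_of_nonneg (by positivity : (0:ℝ) ≤ θ ^ (-(1/2):ℝ))]
    rw [Real.rpow_neg h0.le, hsq, div_eq_mul_inv]
    have : Real.exp (c * (θ - τ)) ≤ 1 := by
      rw [Real.exp_le_one_iff]
      have : θ - τ ≤ 0 := by linarith
      nlinarith
    nlinarith [inv_nonneg.2 (Real.rpow_nonneg h0.le ((1:ℝ)/2))]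

lemma ibp_lemma (c τ : ℝ) (hc : 0 < c) (hτ : 0 < τ) :
    c * (∫ θ in (0:ℝ)..τ, Real.sqrt θ * Real.exp (c * (θ - τ)))
      = Real.sqrt τ - (1/2) * ∫ θ in (0:ℝ)..τ, Real.exp (c * (θ - τ)) / Real.sqrt θ := by
  have key : ∫ θ in (0:ℝ)..τ,
      (Real.exp (c * (θ - τ)) / (2 * Real.sqrt θ) + c * (Real.sqrt θ * Real.exp (c * (θ - τ))))
      = Real.sqrt τ * Real.exp (c * (τ - τ)) - Real.sqrt 0 * Real.exp (c * (0 - τ)) := by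
    apply intervalIntegral.integral_eq_sub_of_hasDeriv_right_of_le
      (f := fun θ => Real.sqrt θ * Real.exp (c * (θ - τ)))
      (f' := fun θ => Real.exp (c * (θ - τ)) / (2 * Real.sqrt θ)
        + c * (Real.sqrt θ * Real.exp (c * (θ - τ)))) hτ.le
    · exact (Real.continuous_sqrt.continuousOn).mul
        ((Real.continuous_exp.comp (by fun_prop)).continuousOn)
    · intro x hx
      have hx0 : x ≠ 0 := hx.1.ne'
      have hd1 : HasDerivAt Real.sqrt (1 / (2 * Real.sqrt x)) x := Real.hasDerivAt_sqrt hx0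
      have hd2 : HasDerivAt (fun θ => Real.exp (c * (θ - τ))) (c * Real.exp (c * (x - τ))) x := by
        have : HasDerivAt (fun θ : ℝ => c * (θ - τ)) c x := by
          simpa using ((hasDerivAt_id x).sub_const τ).const_mul c
        simpa [mul_comm] using this.exp
      have := hd1.fun_mul hd2
      apply HasDerivAt.hasDerivWithinAt
      exact this.congr_deriv (by ring)
    · apply IntervalIntegrable.add
      · have := int_sing c τ hc hτ
        have heq : (fun θ => Real.exp (c * (θ - τ)) / (2 * Real.sqrt θ))
            = fun θ => (1/2) * (Real.exp (c * (θ - τ)) / Real.sqrt θ) := by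
          funext θ; ring
        rw [heq]
        exact this.const_mul _
      · exact ((continuous_const.mul (Real.continuous_sqrt.mul
          (Real.continuous_exp.comp (by fun_prop)))).intervalIntegrable 0 τ)
  rw [intervalIntegral.integral_add] at key
  · have heq : (fun θ => Real.exp (c * (θ - τ)) / (2 * Real.sqrt θ))
        = fun θ => (1/2) * (Real.exp (c * (θ - τ)) / Real.sqrt θ) := by
      funext θ; ring
    rw [heq, intervalIntegral.integral_const_mul, intervalIntegral.integral_const_mul] at key
    simp only [Real.sqrt_zero, zero_mul, sub_zero, sub_self, mul_zero, Real.exp_zero,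
      mul_one] at key
    linarith
  · have heq : (fun θ => Real.exp (c * (θ - τ)) / (2 * Real.sqrt θ))
        = fun θ => (1/2) * (Real.exp (c * (θ - τ)) / Real.sqrt θ) := by
      funext θ; ring
    rw [heq]
    exact (int_sing c τ hc hτ).const_mul _
  · exact ((continuous_const.mul (Real.continuous_sqrt.mul
      (Real.continuous_exp.comp (by fun_prop)))).intervalIntegrable 0 τ)

theorem determinant_formula (τ₁ τ₂ σ₀ S : ℝ) (hτ₁ : 0 < τ₁) (hτ : τ₁ < τ₂)
    (hσ₀ : 0 < σ₀) (hS : 0 < S) (ξ : ℝ) (hξ : ξ ≠ 0) :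
    S * ((∫ θ in (0 : ℝ)..τ₁, Real.exp ((σ₀ * ξ / Real.sqrt 2) ^ 2 * (θ - τ₁)) / Real.sqrt θ) *
          (∫ θ in (0 : ℝ)..τ₂, Real.sqrt θ * Real.exp ((σ₀ * ξ / Real.sqrt 2) ^ 2 * (θ - τ₂))) -
        (∫ θ in (0 : ℝ)..τ₁, Real.sqrt θ * Real.exp ((σ₀ * ξ / Real.sqrt 2) ^ 2 * (θ - τ₁))) *
          (∫ θ in (0 : ℝ)..τ₂, Real.exp ((σ₀ * ξ / Real.sqrt 2) ^ 2 * (θ - τ₂)) / Real.sqrt θ)) =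
      S * (Real.sqrt (τ₁ * τ₂) / (σ₀ * ξ / Real.sqrt 2) ^ 2) *
        ((∫ ρ in (0 : ℝ)..1, Real.exp ((σ₀ * ξ / Real.sqrt 2) ^ 2 * τ₁ * (ρ - 1)) / Real.sqrt ρ) -
          ∫ ρ in (0 : ℝ)..1, Real.exp ((σ₀ * ξ / Real.sqrt 2) ^ 2 * τ₂ * (ρ - 1)) / Real.sqrt ρ) := by
  set c : ℝ := (σ₀ * ξ / Real.sqrt 2) ^ 2 with hc_def
  have hc : 0 < c := by
    have : σ₀ * ξ / Real.sqrt 2 ≠ 0 := by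
      have h2 : Real.sqrt 2 ≠ 0 := by positivity
      exact div_ne_zero (mul_ne_zero hσ₀.ne' hξ) h2
    positivity
  have hτ₂ : 0 < τ₂ := hτ₁.trans hτ
  have hs1 := subst_lemma c τ₁ hτ₁
  have hs2 := subst_lemma c τ₂ hτ₂
  have hi1 := ibp_lemma c τ₁ hc hτ₁
  have hi2 := ibp_lemma c τ₂ hc hτ₂
  set I₁ := ∫ ρ in (0:ℝ)..1, Real.exp (c * τ₁ * (ρ - 1)) / Real.sqrt ρ
  set I₂ := ∫ ρ in (0:ℝ)..1, Real.exp (c * τ₂ * (ρ - 1)) / Real.sqrt ρ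
  set A₁ := ∫ θ in (0:ℝ)..τ₁, Real.exp (c * (θ - τ₁)) / Real.sqrt θ
  set A₂ := ∫ θ in (0:ℝ)..τ₂, Real.exp (c * (θ - τ₂)) / Real.sqrt θ
  set B₁ := ∫ θ in (0:ℝ)..τ₁, Real.sqrt θ * Real.exp (c * (θ - τ₁))
  set B₂ := ∫ θ in (0:ℝ)..τ₂, Real.sqrt θ * Real.exp (c * (θ - τ₂))
  have hsqrt : Real.sqrt (τ₁ * τ₂) = Real.sqrt τ₁ * Real.sqrt τ₂ := Real.sqrt_mul hτ₁.le τ₂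
  rw [hsqrt]
  have hB₁ : B₁ = (Real.sqrt τ₁ - (1/2) * A₁) / c := by field_simp; linarith
  have hB₂ : B₂ = (Real.sqrt τ₂ - (1/2) * A₂) / c := by field_simp; linarith
  rw [hB₁, hB₂, hs1, hs2]
  field_simp
  ring
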